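/- Let Q be a group, Θ : ℓ^∞(Q) → ℝ a right-invariant mean, and h : Q → ℝ_{>0} with h and 1/h bounded. For g ∈ Q define H(g) := Θ(u ↦ h(ug)/h(u)) (assume u ↦ h(ug)/h(u) is bounded for each g). Then for every g ∈ Q, H(g) · H(g⁻¹) ≥ 1. -/

import Mathlib

/-- A function on a group is bounded. -/
def IsBddFun {Q : Type*} (f : Q → ℝ) : Prop := ∃ M : ℝ, ∀ u : Q, |f u| ≤ M

lemma isBddFun_const {Q : Type*} (c : ℝ) : IsBddFun (fun _ : Q => c) :=
  ⟨|c|, fun _ => le_rfl⟩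

lemma isBddFun_add {Q : Type*} {f g : Q → ℝ} (hf : IsBddFun f) (hg : IsBddFun g) :
    IsBddFun (f + g) := by
  obtain ⟨M, hM⟩ := hf; obtain ⟨N, hN⟩ := hg
  exact ⟨M + N, fun u => (abs_add_le _ _).trans (add_le_add (hM u) (hN u))⟩

lemma isBddFun_smul {Q : Type*} (c : ℝ) {f : Q → ℝ} (hf : IsBddFun f) :
    IsBddFun (c • f) := by
  obtain ⟨M, hM⟩ := hf
  refine ⟨|c| * M, fun u => ?_⟩
  simp only [Pi.smul_apply, smul_eq_mul, abs_mul]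
  exact mul_le_mul_of_nonneg_left (hM u) (abs_nonneg c)

lemma isBddFun_sub {Q : Type*} {f g : Q → ℝ} (hf : IsBddFun f) (hg : IsBddFun g) :
    IsBddFun (f - g) := by
  have := isBddFun_add hf (isBddFun_smul (-1) hg)
  convert this using 1
  ext u; simp; ring

/-- For a right-invariant mean `Θ` and `h > 0` with `h`, `1/h` bounded, the averaged
cocycle `H(g) = Θ(u ↦ h(ug)/h(u))` satisfies `H(g) · H(g⁻¹) ≥ 1`. -/
theorem stmt_8 {Q : Type*} [Group Q] (Θ : (Q → ℝ) → ℝ)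
    (hadd : ∀ f g : Q → ℝ, IsBddFun f → IsBddFun g → Θ (f + g) = Θ f + Θ g)
    (hsmul : ∀ (c : ℝ) (f : Q → ℝ), IsBddFun f → Θ (c • f) = c * Θ f)
    (hpos : ∀ f : Q → ℝ, IsBddFun f → (∀ u, 0 ≤ f u) → 0 ≤ Θ f)
    (hone : Θ (fun _ => 1) = 1)
    (hrinv : ∀ f : Q → ℝ, IsBddFun f → ∀ g : Q, Θ (fun u => f (u * g)) = Θ f)
    (h : Q → ℝ) (hh : ∀ u, 0 < h u)
    (hb : IsBddFun h) (hb' : IsBddFun (fun u => (h u)⁻¹))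
    (hquot : ∀ g : Q, IsBddFun (fun u => h (u * g) / h u))
    (H : Q → ℝ) (hH : ∀ g : Q, H g = Θ (fun u => h (u * g) / h u)) :
    ∀ g : Q, 1 ≤ H g * H g⁻¹ := by
  obtain ⟨M, hM⟩ := hb
  obtain ⟨M', hM'⟩ := hb'
  -- basic facts about the bounds
  intro g
  set F : Q → ℝ := fun u => h (u * g) / h u with hF
  set G : Q → ℝ := fun u => h u / h (u * g) with hG
  have hFpos : ∀ u, 0 < F u := fun u => div_pos (hh _) (hh _)
  have hGpos : ∀ u, 0 < G u := fun u => div_pos (hh _) (hh _)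
  have hFG : ∀ u, F u * G u = 1 := fun u => by
    have h1 := (hh u).ne'
    have h2 := (hh (u * g)).ne'
    simp only [hF, hG]
    field_simp
  have hMpos : 0 < M := lt_of_lt_of_le (hh (1 : Q)) ((le_abs_self _).trans (hM 1))
  have hM'pos : 0 < M' := lt_of_lt_of_le (inv_pos.2 (hh (1 : Q)))
    ((le_abs_self _).trans (hM' 1))
  -- G is bounded
  have hGbdd : IsBddFun G := by
    refine ⟨M * M', fun u => ?_⟩
    rw [abs_of_pos (hGpos u)]
    have h1 : h u ≤ M := (le_abs_self _).trans (hM u)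
    have h2 : (h (u * g))⁻¹ ≤ M' := (le_abs_self _).trans (hM' (u * g))
    calc G u = h u * (h (u * g))⁻¹ := div_eq_mul_inv _ _
      _ ≤ M * M' := mul_le_mul h1 h2 (le_of_lt (inv_pos.2 (hh _))) (le_of_lt hMpos)
  -- monotonicity of Θ
  have hmono : ∀ f₁ f₂ : Q → ℝ, IsBddFun f₁ → IsBddFun f₂ →
      (∀ u, f₁ u ≤ f₂ u) → Θ f₁ ≤ Θ f₂ := by
    intro f₁ f₂ hb₁ hb₂ hle
    have key : Θ f₂ = Θ f₁ + Θ (f₂ - f₁) := by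
      have := hadd f₁ (f₂ - f₁) hb₁ (isBddFun_sub hb₂ hb₁)
      simpa using this
    have : 0 ≤ Θ (f₂ - f₁) :=
      hpos _ (isBddFun_sub hb₂ hb₁) (fun u => sub_nonneg.2 (hle u))
    linarith
  -- Θ of constants
  have hconst : ∀ c : ℝ, Θ (fun _ => c) = c := by
    intro c
    have e : (fun _ : Q => c) = c • (fun _ : Q => (1 : ℝ)) := by ext u; simp
    rw [e, hsmul c _ (isBddFun_const 1), hone, mul_one]
  -- H g⁻¹ = Θ G via right invariance
  have hHinv : H g⁻¹ = Θ G := by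
    rw [hH g⁻¹, ← hrinv (fun u => h (u * g⁻¹) / h u) (hquot g⁻¹) g]
    congr 1
    ext u
    simp [hG, mul_inv_cancel_right]
  -- lower bound ε on F
  set ε : ℝ := (M * M')⁻¹ with hε
  have hεpos : 0 < ε := inv_pos.2 (mul_pos hMpos hM'pos)
  have hFε : ∀ u, ε ≤ F u := by
    intro u
    have h1 : h u ≤ M := (le_abs_self _).trans (hM u)
    have h2 : (h (u * g))⁻¹ ≤ M' := (le_abs_self _).trans (hM' (u * g))
    have h3 : M'⁻¹ ≤ h (u * g) := by
      rw [inv_le_comm₀ hM'pos (hh _)]; exact h2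
    have h4 : (h u)⁻¹ ≥ M⁻¹ := by
      rw [ge_iff_le, inv_le_inv₀ hMpos (hh u)]
      exact h1
    have : ε = M'⁻¹ * M⁻¹ := by rw [hε, mul_inv]; ring
    rw [this]
    calc M'⁻¹ * M⁻¹ ≤ h (u * g) * (h u)⁻¹ :=
          mul_le_mul h3 h4 (le_of_lt (inv_pos.2 hMpos)) (le_of_lt (hh _))
      _ = F u := (div_eq_mul_inv _ _).symm
  -- c := Θ F is positive
  set c : ℝ := Θ F with hc
  have hcε : ε ≤ c := by
    have := hmono (fun _ => ε) F (isBddFun_const ε) (hquot g) hFε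
    rwa [hconst] at this
  have hcpos : 0 < c := lt_of_lt_of_le hεpos hcε
  set d : ℝ := c⁻¹ with hd
  have hcd : c * d = 1 := mul_inv_cancel₀ (ne_of_gt hcpos)
  -- pointwise Jensen: G u ≥ 2d - d*d*F u
  have hjensen : ∀ u, 2 * d - d * d * F u ≤ G u := by
    intro u
    have h1 : 0 ≤ G u * (d * F u - 1) ^ 2 :=
      mul_nonneg (le_of_lt (hGpos u)) (sq_nonneg _)
    nlinarith [hFG u, hGpos u, hFpos u, sq_nonneg (d * F u - 1)]
  -- Θ of the affine minorant
  have haff : Θ (fun u => 2 * d - d * d * F u) = 2 * d - d * d * c := by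
    have e1 : (fun u => 2 * d - d * d * F u)
        = (fun _ : Q => 2 * d) + (-(d * d)) • F := by
      ext u
      simp only [Pi.add_apply, Pi.smul_apply, smul_eq_mul]
      ring
    rw [e1, hadd _ _ (isBddFun_const _) (isBddFun_smul _ (hquot g)),
      hconst, hsmul _ _ (hquot g)]
    ring
  have hminorbdd : IsBddFun (fun u => 2 * d - d * d * F u) := by
    have := isBddFun_sub (isBddFun_const (Q := Q) (2 * d))
      (isBddFun_smul (d * d) (hquot g))
    exact this
  have hΘG : 2 * d - d * d * c ≤ Θ G := by
    rw [← haff]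
    exact hmono _ _ hminorbdd hGbdd hjensen
  -- conclude
  have hkey : d ≤ Θ G := by nlinarith [hcd]
  rw [hH g, hHinv, ← hc]
  calc (1 : ℝ) = c * d := hcd.symm
    _ ≤ c * Θ G := mul_le_mul_of_nonneg_left hkey (le_of_lt hcpos)
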